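/- The implicitly defined function N_E ↦ N_I(N_E) is differentiable and strictly increasing on [0,∞), with derivative N_I'(N_E) = b_E^I · N_I(N_E)² · I(N_E) / (√a_I + b_I^I · N_I(N_E)² · I(N_E)); consequently 0 < N_I'(N_E) < b_E^I / b_I^I for all N_E ≥ 0. -/

import Mathlib

/-- K(w_R, w_F) := ∫_0^∞ (e^{-s²/2}/s)(e^{s·w_F} − e^{s·w_R}) ds (Lebesgue integral on (0,∞)). -/
noncomputable def K (wR wF : ℝ) : ℝ :=
  ∫ s in Set.Ioi (0 : ℝ), Real.exp (-s ^ 2 / 2) / s * (Real.exp (s * wF) - Real.exp (s * wR))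

/-- I₂(N_E,N_I) with V_0^I(N_E,N_I) := b_E^I N_E − b_I^I N_I + (b_E^I − b_E^E) ν_{E,ext}. -/
noncomputable def I2 (VR VF bEE bEI bII aI ν NE NI : ℝ) : ℝ :=
  K ((VR - (bEI * NE - bII * NI + (bEI - bEE) * ν)) / Real.sqrt aI)
    ((VF - (bEI * NE - bII * NI + (bEI - bEE) * ν)) / Real.sqrt aI)

/-- I(N_E) := ∫_0^∞ e^{-s²/2} · exp(−(b_E^I N_E − b_I^I N_I(N_E) + (b_E^I − b_E^E)ν)s/√a_I)
· (e^{s V_F/√a_I} − e^{s V_R/√a_I}) ds, where N_I(·) is the implicitly defined function. -/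
noncomputable def Ifun (VR VF bEE bEI bII aI ν : ℝ) (NIfun : ℝ → ℝ) (NE : ℝ) : ℝ :=
  ∫ s in Set.Ioi (0 : ℝ),
    Real.exp (-s ^ 2 / 2) *
      Real.exp (-((bEI * NE - bII * NIfun NE + (bEI - bEE) * ν) * s) / Real.sqrt aI) *
      (Real.exp (s * VF / Real.sqrt aI) - Real.exp (s * VR / Real.sqrt aI))

open MeasureTheory Filter

set_option maxHeartbeats 1000000

/-- Gaussian times exponential is integrable on `(0,∞)`. -/
lemma aux_integrable_gauss_mul (w : ℝ) :
    IntegrableOn (fun s : ℝ => Real.exp (-s ^ 2 / 2) * Real.exp (s * w)) (Set.Ioi 0) := by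
  have h : Integrable (fun s : ℝ =>
      Real.exp (w ^ 2 / 2) * Real.exp (-(1 / 2 : ℝ) * (s - w) ^ 2)) :=
    ((integrable_exp_neg_mul_sq (by norm_num : (0:ℝ) < 1/2)).comp_sub_right w).const_mul _
  have heq : (fun s : ℝ => Real.exp (-s ^ 2 / 2) * Real.exp (s * w))
      = fun s : ℝ => Real.exp (w ^ 2 / 2) * Real.exp (-(1 / 2 : ℝ) * (s - w) ^ 2) := by
    funext s
    rw [← Real.exp_add, ← Real.exp_add]
    congr 1
    ring
  rw [heq]
  exact h.integrableOn

lemma aux_integrable_gauss_sub (wR wF : ℝ) :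
    IntegrableOn (fun s : ℝ =>
      Real.exp (-s ^ 2 / 2) * (Real.exp (s * wF) - Real.exp (s * wR))) (Set.Ioi 0) := by
  have h := (aux_integrable_gauss_mul wF).sub (aux_integrable_gauss_mul wR)
  simpa [mul_sub, Pi.sub_def] using h

lemma aux_exp_sub_le (x y : ℝ) : Real.exp x - Real.exp y ≤ (x - y) * Real.exp x := by
  have h1 := Real.add_one_le_exp (y - x)
  have h2 : Real.exp (y - x) = Real.exp y / Real.exp x := Real.exp_sub y x
  rw [h2] at h1
  have h3 : (y - x + 1) * Real.exp x ≤ Real.exp y :=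
    (le_div_iff₀ (Real.exp_pos x)).mp h1
  nlinarith [Real.exp_pos x]

lemma aux_meas_K (wR wF : ℝ) :
    AEStronglyMeasurable (fun s : ℝ =>
      Real.exp (-s ^ 2 / 2) / s * (Real.exp (s * wF) - Real.exp (s * wR)))
      (volume.restrict (Set.Ioi 0)) := by
  apply ContinuousOn.aestronglyMeasurable ?_ measurableSet_Ioi
  apply ContinuousOn.mul
  · exact ContinuousOn.div (Continuous.continuousOn (by fun_prop)) continuousOn_id
      (fun s hs => ne_of_gt hs)
  · exact Continuous.continuousOn (by fun_prop)

lemma aux_integrable_K {wR wF : ℝ} (h : wR ≤ wF) :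
    IntegrableOn (fun s : ℝ =>
      Real.exp (-s ^ 2 / 2) / s * (Real.exp (s * wF) - Real.exp (s * wR))) (Set.Ioi 0) := by
  refine ((aux_integrable_gauss_mul wF).const_mul (wF - wR)).mono' (aux_meas_K wR wF) ?_
  filter_upwards [ae_restrict_mem measurableSet_Ioi] with s hs
  have hs0 : (0:ℝ) < s := hs
  have hkey : Real.exp (s * wF) - Real.exp (s * wR) ≤ (s * wF - s * wR) * Real.exp (s * wF) :=
    aux_exp_sub_le _ _
  have hmul : s * wR ≤ s * wF := by nlinarith
  have hnn : 0 ≤ Real.exp (s * wF) - Real.exp (s * wR) := by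
    have := Real.exp_le_exp.mpr hmul
    linarith
  have hq : 0 ≤ Real.exp (-s ^ 2 / 2) / s := div_nonneg (Real.exp_pos _).le hs0.le
  rw [Real.norm_eq_abs, abs_of_nonneg (mul_nonneg hq hnn)]
  calc Real.exp (-s ^ 2 / 2) / s * (Real.exp (s * wF) - Real.exp (s * wR))
      ≤ Real.exp (-s ^ 2 / 2) / s * ((s * wF - s * wR) * Real.exp (s * wF)) :=
        mul_le_mul_of_nonneg_left hkey hq
    _ = (wF - wR) * (Real.exp (-s ^ 2 / 2) * Real.exp (s * wF)) := by
        field_simp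

/-- The inner integral `J` (equal to `Ifun` after a change of parameters). -/
noncomputable def Jv (VR VF r v : ℝ) : ℝ :=
  ∫ s in Set.Ioi (0:ℝ),
    Real.exp (-s ^ 2 / 2) * (Real.exp (s * ((VF - v) / r)) - Real.exp (s * ((VR - v) / r)))

lemma Jv_pos {VR VF r : ℝ} (hV : VR < VF) (hr : 0 < r) (v : ℝ) : 0 < Jv VR VF r v := by
  have hint := aux_integrable_gauss_sub ((VR - v) / r) ((VF - v) / r)
  have hnn : 0 ≤ᵐ[volume.restrict (Set.Ioi 0)] fun s : ℝ =>
      Real.exp (-s ^ 2 / 2) * (Real.exp (s * ((VF - v) / r)) - Real.exp (s * ((VR - v) / r))) := by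
    filter_upwards [ae_restrict_mem measurableSet_Ioi] with s hs
    have hs0 : (0:ℝ) < s := hs
    have hw : (VR - v) / r ≤ (VF - v) / r := by
      rw [div_le_div_iff₀ hr hr]
      nlinarith
    have hmul : s * ((VR - v) / r) ≤ s * ((VF - v) / r) := by nlinarith
    have hee := Real.exp_le_exp.mpr hmul
    have hgg := (Real.exp_pos (-s ^ 2 / 2)).le
    simp only [Pi.zero_apply]
    nlinarith
  rw [Jv, setIntegral_pos_iff_support_of_nonneg_ae hnn hint]
  have hsub : Set.Ioi (0:ℝ) ⊆ (Function.support fun s : ℝ =>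
      Real.exp (-s ^ 2 / 2) * (Real.exp (s * ((VF - v) / r)) - Real.exp (s * ((VR - v) / r))))
      ∩ Set.Ioi 0 := by
    intro s hs
    have hs0 : (0:ℝ) < s := hs
    refine ⟨?_, hs⟩
    have hw : (VR - v) / r < (VF - v) / r := by
      rw [div_lt_div_iff₀ hr hr]
      nlinarith
    have hlt : s * ((VR - v) / r) < s * ((VF - v) / r) := by nlinarith
    have hexp := Real.exp_lt_exp.mpr hlt
    have : 0 < Real.exp (-s ^ 2 / 2) *
        (Real.exp (s * ((VF - v) / r)) - Real.exp (s * ((VR - v) / r))) := by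
      have := Real.exp_pos (-s ^ 2 / 2)
      nlinarith
    exact Function.mem_support.mpr (ne_of_gt this)
  calc (0:ENNReal) < volume (Set.Ioi (0:ℝ)) := by simp [Real.volume_Ioi]
    _ ≤ _ := measure_mono hsub

lemma Jv_continuousAt {VR VF r : ℝ} (hr : 0 < r) (v₀ : ℝ) :
    ContinuousAt (Jv VR VF r) v₀ := by
  have key : ContinuousAt (fun v : ℝ => ∫ s in Set.Ioi (0:ℝ),
      Real.exp (-s ^ 2 / 2) * (Real.exp (s * ((VF - v) / r)) - Real.exp (s * ((VR - v) / r))))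
      v₀ := by
    apply continuousAt_of_dominated
      (bound := fun s : ℝ =>
        2 * (Real.exp (-s ^ 2 / 2) * Real.exp (s * ((|VF| + |VR| + |v₀| + 1) / r))))
    · exact Eventually.of_forall fun v => Continuous.aestronglyMeasurable (by fun_prop)
    · filter_upwards [Metric.ball_mem_nhds v₀ one_pos] with v hv
      filter_upwards [ae_restrict_mem measurableSet_Ioi] with s hs
      have hs0 : (0:ℝ) < s := hs
      have hvv : |v - v₀| < 1 := by
        have := Metric.mem_ball.mp hv
        rwa [Real.dist_eq] at this
      have hvb : -v ≤ |v₀| + 1 := by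
        have h1 := abs_lt.mp hvv
        have h2 := abs_le.mp (le_refl |v₀|)
        cases abs_cases v₀ with
        | inl h => nlinarith [h.1]
        | inr h => nlinarith [h.1]
      have hM1 : (VF - v) / r ≤ (|VF| + |VR| + |v₀| + 1) / r := by
        rw [div_le_div_iff₀ hr hr]
        have := le_abs_self VF
        have := abs_nonneg VR
        nlinarith
      have hM2 : (VR - v) / r ≤ (|VF| + |VR| + |v₀| + 1) / r := by
        rw [div_le_div_iff₀ hr hr]
        have := le_abs_self VR
        have := abs_nonneg VF
        nlinarith
      have h1 : Real.exp (s * ((VF - v) / r)) ≤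
          Real.exp (s * ((|VF| + |VR| + |v₀| + 1) / r)) :=
        Real.exp_le_exp.mpr (mul_le_mul_of_nonneg_left hM1 hs0.le)
      have h2 : Real.exp (s * ((VR - v) / r)) ≤
          Real.exp (s * ((|VF| + |VR| + |v₀| + 1) / r)) :=
        Real.exp_le_exp.mpr (mul_le_mul_of_nonneg_left hM2 hs0.le)
      rw [Real.norm_eq_abs, abs_mul, abs_of_nonneg (Real.exp_pos _).le]
      have h3 : |Real.exp (s * ((VF - v) / r)) - Real.exp (s * ((VR - v) / r))| ≤
          2 * Real.exp (s * ((|VF| + |VR| + |v₀| + 1) / r)) := by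
        rw [abs_le]
        constructor
        · nlinarith [Real.exp_pos (s * ((VF - v) / r)), Real.exp_pos (s * ((VR - v) / r))]
        · nlinarith [Real.exp_pos (s * ((VF - v) / r)), Real.exp_pos (s * ((VR - v) / r))]
      nlinarith [Real.exp_pos (-s ^ 2 / 2),
        abs_nonneg (Real.exp (s * ((VF - v) / r)) - Real.exp (s * ((VR - v) / r)))]
    · exact (aux_integrable_gauss_mul ((|VF| + |VR| + |v₀| + 1) / r)).const_mul 2
    · exact Eventually.of_forall fun s => Continuous.continuousAt (by fun_prop)
  exact key

/-- Differentiation of `u ↦ K ((VR-u)/r) ((VF-u)/r)` under the integral sign. -/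
lemma hasDerivAt_KF {VR VF r : ℝ} (hV : VR < VF) (hr : 0 < r) (u₀ : ℝ) :
    HasDerivAt (fun u => K ((VR - u) / r) ((VF - u) / r)) (-(1/r) * Jv VR VF r u₀) u₀ := by
  have hmain := hasDerivAt_integral_of_dominated_loc_of_deriv_le (μ := volume.restrict (Set.Ioi 0))
    (F := fun (u : ℝ) (s : ℝ) =>
      Real.exp (-s ^ 2 / 2) / s * (Real.exp (s * ((VF - u) / r)) - Real.exp (s * ((VR - u) / r))))
    (F' := fun (u : ℝ) (s : ℝ) =>
      -(1/r) * (Real.exp (-s ^ 2 / 2) *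
        (Real.exp (s * ((VF - u) / r)) - Real.exp (s * ((VR - u) / r)))))
    (x₀ := u₀)
    (bound := fun s : ℝ =>
      (1/r) * (Real.exp (-s ^ 2 / 2) * Real.exp (s * ((VF - u₀ + 1) / r))))
    (Metric.ball_mem_nhds u₀ one_pos)
    (Eventually.of_forall fun u => aux_meas_K ((VR - u) / r) ((VF - u) / r))
    (aux_integrable_K (by rw [div_le_div_iff₀ hr hr]; nlinarith))
    (Continuous.aestronglyMeasurable (by fun_prop))
    ?_ ?_ ?_
  · have hval : (∫ s in Set.Ioi (0:ℝ), -(1/r) * (Real.exp (-s ^ 2 / 2) *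
        (Real.exp (s * ((VF - u₀) / r)) - Real.exp (s * ((VR - u₀) / r)))))
        = -(1/r) * Jv VR VF r u₀ := by
      rw [integral_const_mul]
      rfl
    rw [← hval]
    exact hmain.2
  · -- bound on the derivative on the ball
    filter_upwards [ae_restrict_mem measurableSet_Ioi] with s hs
    intro u hu
    have hs0 : (0:ℝ) < s := hs
    have huu : |u - u₀| < 1 := by
      have := Metric.mem_ball.mp hu
      rwa [Real.dist_eq] at this
    have hub := abs_lt.mp huu
    have hle1 : (VF - u) / r ≤ (VF - u₀ + 1) / r := by
      rw [div_le_div_iff₀ hr hr]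
      nlinarith [hub.1]
    have hle2 : (VR - u) / r ≤ (VF - u) / r := by
      rw [div_le_div_iff₀ hr hr]
      nlinarith
    have hE1 : Real.exp (s * ((VF - u) / r)) ≤ Real.exp (s * ((VF - u₀ + 1) / r)) :=
      Real.exp_le_exp.mpr (mul_le_mul_of_nonneg_left hle1 hs0.le)
    have hE2 : Real.exp (s * ((VR - u) / r)) ≤ Real.exp (s * ((VF - u) / r)) :=
      Real.exp_le_exp.mpr (mul_le_mul_of_nonneg_left hle2 hs0.le)
    have hnn : 0 ≤ Real.exp (-s ^ 2 / 2) *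
        (Real.exp (s * ((VF - u) / r)) - Real.exp (s * ((VR - u) / r))) := by
      have := (Real.exp_pos (-s ^ 2 / 2)).le
      nlinarith
    rw [Real.norm_eq_abs, abs_mul, abs_neg, abs_of_nonneg (by positivity : (0:ℝ) ≤ 1/r),
      abs_of_nonneg hnn]
    have hdle : Real.exp (s * ((VF - u) / r)) - Real.exp (s * ((VR - u) / r)) ≤
        Real.exp (s * ((VF - u₀ + 1) / r)) := by
      have := (Real.exp_pos (s * ((VR - u) / r))).le
      linarith
    have h1r : (0:ℝ) ≤ 1/r := by positivity
    have hgE := (Real.exp_pos (-s ^ 2 / 2)).le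
    nlinarith [mul_le_mul_of_nonneg_left hdle hgE]
  · exact (aux_integrable_gauss_mul ((VF - u₀ + 1) / r)).const_mul (1/r)
  · -- pointwise differentiability in u
    filter_upwards [ae_restrict_mem measurableSet_Ioi] with s hs
    intro u hu
    have hs0 : (0:ℝ) < s := hs
    have hVFd : HasDerivAt (fun u : ℝ => s * ((VF - u) / r)) (-(s/r)) u := by
      have h0 : HasDerivAt (fun u : ℝ => s/r * u) (s/r) u := by
        simpa using (hasDerivAt_id u).const_mul (s/r)
      have h1 : HasDerivAt (fun u : ℝ => s * VF / r - s/r * u) (-(s/r)) u := h0.const_sub _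
      have heq : (fun u : ℝ => s * ((VF - u) / r)) = fun u : ℝ => s * VF / r - s/r * u := by
        funext u; ring
      rw [heq]; exact h1
    have hVRd : HasDerivAt (fun u : ℝ => s * ((VR - u) / r)) (-(s/r)) u := by
      have h0 : HasDerivAt (fun u : ℝ => s/r * u) (s/r) u := by
        simpa using (hasDerivAt_id u).const_mul (s/r)
      have h1 : HasDerivAt (fun u : ℝ => s * VR / r - s/r * u) (-(s/r)) u := h0.const_sub _
      have heq : (fun u : ℝ => s * ((VR - u) / r)) = fun u : ℝ => s * VR / r - s/r * u := by
        funext u; ring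
      rw [heq]; exact h1
    have hD := (hVFd.exp.sub hVRd.exp).const_mul (Real.exp (-s ^ 2 / 2) / s)
    convert hD using 1
    · rfl
    · rfl
    have hsne : s ≠ 0 := ne_of_gt hs0
    have hrne : r ≠ 0 := ne_of_gt hr
    field_simp
    ring

/-- `Ifun` is `Jv` evaluated at the mean-field potential. -/
lemma Ifun_eq_Jv (VR VF bEE bEI bII aI ν : ℝ) (NIf : ℝ → ℝ) (NE : ℝ) :
    Ifun VR VF bEE bEI bII aI ν NIf NE
      = Jv VR VF (Real.sqrt aI) (bEI * NE - bII * NIf NE + (bEI - bEE) * ν) := by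
  rw [Ifun, Jv]
  congr 1
  funext s
  simp only [mul_sub, ← Real.exp_add]
  congr 1 <;> exact congrArg Real.exp (by ring)

/- STATEMENT 9: The implicitly defined function N_E ↦ N_I(N_E) is differentiable and
strictly increasing on [0,∞), with derivative
N_I'(N_E) = b_E^I N_I(N_E)² I(N_E)/(√a_I + b_I^I N_I(N_E)² I(N_E));
consequently 0 < N_I'(N_E) < b_E^I/b_I^I for all N_E ≥ 0. -/
theorem NIfun_deriv (VR VF bEE bIE bEI bII τI aE aI ν : ℝ)
    (hV : VR < VF) (hbEE : 0 < bEE) (hbIE : 0 < bIE) (hbEI : 0 < bEI) (hbII : 0 < bII)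
    (hτI : 0 < τI) (haE : 0 < aE) (haI : 0 < aI) (hν : 0 ≤ ν)
    (NIfun : ℝ → ℝ)
    (hNIfun : ∀ NE : ℝ, 0 ≤ NE → NIfun NE ∈ Set.Ioo 0 (1 / τI) ∧
      NIfun NE * (τI + I2 VR VF bEE bEI bII aI ν NE (NIfun NE)) = 1) :
    StrictMonoOn NIfun (Set.Ici 0) ∧
    ∀ NE ∈ Set.Ici (0 : ℝ),
      HasDerivWithinAt NIfun
        (bEI * (NIfun NE) ^ 2 * Ifun VR VF bEE bEI bII aI ν NIfun NE /
          (Real.sqrt aI + bII * (NIfun NE) ^ 2 * Ifun VR VF bEE bEI bII aI ν NIfun NE))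
        (Set.Ici 0) NE ∧
      0 < bEI * (NIfun NE) ^ 2 * Ifun VR VF bEE bEI bII aI ν NIfun NE /
          (Real.sqrt aI + bII * (NIfun NE) ^ 2 * Ifun VR VF bEE bEI bII aI ν NIfun NE) ∧
      bEI * (NIfun NE) ^ 2 * Ifun VR VF bEE bEI bII aI ν NIfun NE /
          (Real.sqrt aI + bII * (NIfun NE) ^ 2 * Ifun VR VF bEE bEI bII aI ν NIfun NE) <
        bEI / bII := by
  have hr : 0 < Real.sqrt aI := Real.sqrt_pos.mpr haI
  set r := Real.sqrt aI with hrdef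
  set κ := (bEI - bEE) * ν with hκdef
  set F : ℝ → ℝ := fun u => K ((VR - u) / r) ((VF - u) / r) with hFdef
  set J : ℝ → ℝ := Jv VR VF r with hJdef
  set V0 : ℝ → ℝ := fun x => bEI * x - bII * NIfun x + κ with hV0def
  have hFderiv : ∀ u, HasDerivAt F (-(1/r) * J u) u := fun u => hasDerivAt_KF hV hr u
  have hJpos : ∀ v, 0 < J v := fun v => Jv_pos hV hr v
  have hJcont : ∀ v, ContinuousAt J v := fun v => Jv_continuousAt hr v
  have hEq : ∀ x, 0 ≤ x → NIfun x * (τI + F (V0 x)) = 1 := fun x hx => (hNIfun x hx).2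
  have hpos : ∀ x, 0 ≤ x → 0 < NIfun x := fun x hx => (hNIfun x hx).1.1
  have hIfun : ∀ x : ℝ, Ifun VR VF bEE bEI bII aI ν NIfun x = J (V0 x) := fun x =>
    Ifun_eq_Jv VR VF bEE bEI bII aI ν NIfun x
  have hFanti : StrictAnti F := by
    apply strictAnti_of_deriv_neg
    intro u
    rw [(hFderiv u).deriv]
    have h1 : 0 < 1/r := by positivity
    nlinarith [hJpos u]
  have hmono : StrictMonoOn NIfun (Set.Ici 0) := by
    intro a ha b hb hab
    by_contra hle
    push_neg at hle
    have ha' : (0:ℝ) ≤ a := ha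
    have hb' : (0:ℝ) ≤ b := hb
    have hVab : V0 a < V0 b := by
      simp only [hV0def]
      have := mul_le_mul_of_nonneg_left hle hbII.le
      nlinarith
    have hFlt : F (V0 b) < F (V0 a) := hFanti hVab
    have h1 := hEq a ha'
    have h2 := hEq b hb'
    have hpa := hpos a ha'
    have hpb := hpos b hb'
    have hτb : 0 < τI + F (V0 b) := by nlinarith
    nlinarith [mul_le_mul_of_nonneg_right hle hτb.le, mul_lt_mul_of_pos_left hFlt hpa]
  refine ⟨hmono, ?_⟩
  intro NE hNE
  have hNE' : (0:ℝ) ≤ NE := hNE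
  rw [hIfun NE]
  have hN : 0 < NIfun NE := hpos NE hNE'
  have hJs : 0 < J (V0 NE) := hJpos (V0 NE)
  have hnum : 0 < bEI * NIfun NE ^ 2 * J (V0 NE) :=
    mul_pos (mul_pos hbEI (pow_pos hN 2)) hJs
  have hterm : 0 < bII * NIfun NE ^ 2 * J (V0 NE) :=
    mul_pos (mul_pos hbII (pow_pos hN 2)) hJs
  have hden : 0 < r + bII * NIfun NE ^ 2 * J (V0 NE) := by linarith
  refine ⟨?_, div_pos hnum hden, by rw [div_lt_div_iff₀ hden hbII]; nlinarith [mul_pos hbEI hr]⟩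
  rw [hasDerivWithinAt_iff_tendsto_slope]
  set s' : Set ℝ := Set.Ici 0 \ {NE} with hs'def
  -- Mean value theorem: for each x, a point ξ between V0 x and V0 NE
  have key : ∀ x : ℝ, ∃ ξ : ℝ, x ∈ s' →
      (|ξ - V0 NE| ≤ |V0 x - V0 NE| ∧
        F (V0 x) - F (V0 NE) = -(1/r) * J ξ * (V0 x - V0 NE)) := by
    intro x
    by_cases hx : x ∈ s'
    swap
    · exact ⟨0, fun h => absurd h hx⟩
    rcases lt_trichotomy (V0 x) (V0 NE) with h | h | h
    · obtain ⟨ξ, hmem, hs⟩ := exists_hasDerivAt_eq_slope F (fun u => -(1/r) * J u) h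
        (fun u _ => (hFderiv u).continuousAt.continuousWithinAt) (fun u _ => hFderiv u)
      have hs' : -(1/r) * J ξ = (F (V0 NE) - F (V0 x)) / (V0 NE - V0 x) := hs
      have hne : V0 NE - V0 x ≠ 0 := by
        have : 0 < V0 NE - V0 x := by linarith
        exact ne_of_gt this
      have hAC : F (V0 NE) - F (V0 x) = -(1/r) * J ξ * (V0 NE - V0 x) :=
        (div_eq_iff hne).mp hs'.symm
      refine ⟨ξ, fun _ => ⟨?_, ?_⟩⟩
      · rw [abs_of_nonpos (by linarith [hmem.2]), abs_of_neg (by linarith : V0 x - V0 NE < 0)]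
        linarith [hmem.1]
      · linear_combination -hAC
    · refine ⟨V0 NE, fun _ => ⟨by simp [h], by rw [h]; ring⟩⟩
    · obtain ⟨ξ, hmem, hs⟩ := exists_hasDerivAt_eq_slope F (fun u => -(1/r) * J u) h
        (fun u _ => (hFderiv u).continuousAt.continuousWithinAt) (fun u _ => hFderiv u)
      have hs' : -(1/r) * J ξ = (F (V0 x) - F (V0 NE)) / (V0 x - V0 NE) := hs
      have hne : V0 x - V0 NE ≠ 0 := by
        have : 0 < V0 x - V0 NE := by linarith
        exact ne_of_gt this
      have hAC : F (V0 x) - F (V0 NE) = -(1/r) * J ξ * (V0 x - V0 NE) :=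
        (div_eq_iff hne).mp hs'.symm
      refine ⟨ξ, fun _ => ⟨?_, ?_⟩⟩
      · rw [abs_of_nonneg (by linarith [hmem.1]), abs_of_pos (by linarith : 0 < V0 x - V0 NE)]
        linarith [hmem.2]
      · linear_combination hAC
  choose ξ hξ using key
  -- The fundamental algebraic identity
  have hC : ∀ x ∈ s',
      (NIfun x - NIfun NE) * (1 + 1/r * bII * NIfun NE * NIfun x * J (ξ x))
        = 1/r * bEI * NIfun NE * NIfun x * J (ξ x) * (x - NE) := by
    intro x hx
    obtain ⟨hxb, hxi⟩ := hξ x hx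
    have hx0 : (0:ℝ) ≤ x := hx.1
    have h1 := hEq x hx0
    have h2 := hEq NE hNE'
    have hA : (NIfun x - NIfun NE) * (τI + F (V0 x))
        + NIfun NE * (F (V0 x) - F (V0 NE)) = 0 := by linear_combination h1 - h2
    rw [hxi] at hA
    simp only [hV0def] at hA
    have hB : (NIfun x - NIfun NE) * (τI + F (V0 x))
        = 1/r * NIfun NE * J (ξ x) * (bEI * (x - NE) - bII * (NIfun x - NIfun NE)) := by
      linear_combination hA
    linear_combination NIfun x * hB - (NIfun x - NIfun NE) * h1
  -- positivity of the denominator-type terms along the way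
  have hP : ∀ x ∈ s', 0 < 1/r * NIfun NE * NIfun x * J (ξ x) := by
    intro x hx
    have := hpos x hx.1
    have := hJpos (ξ x)
    have h1 : 0 < 1/r := by positivity
    positivity
  -- Lipschitz bound
  have hLip : ∀ x ∈ s', bII * |NIfun x - NIfun NE| ≤ bEI * |x - NE| := by
    intro x hx
    have hCx := hC x hx
    have hPx := hP x hx
    have hDpos : 0 < 1 + 1/r * bII * NIfun NE * NIfun x * J (ξ x) := by nlinarith
    have hQpos : 0 < 1/r * bEI * NIfun NE * NIfun x * J (ξ x) := by nlinarith
    have habs := congrArg abs hCx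
    rw [abs_mul, abs_mul, abs_of_pos hDpos, abs_of_pos hQpos] at habs
    by_contra hcon
    push_neg at hcon
    nlinarith [mul_lt_mul_of_pos_left hcon hPx, abs_nonneg (NIfun x - NIfun NE)]
  -- slope formula
  have hslope : ∀ x ∈ s', slope NIfun NE x =
      1/r * bEI * NIfun NE * NIfun x * J (ξ x)
        / (1 + 1/r * bII * NIfun NE * NIfun x * J (ξ x)) := by
    intro x hx
    have hCx := hC x hx
    have hPx := hP x hx
    have hDpos : 0 < 1 + 1/r * bII * NIfun NE * NIfun x * J (ξ x) := by nlinarith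
    have hxne : x ≠ NE := hx.2
    rw [slope_def_field, div_eq_div_iff (sub_ne_zero.mpr hxne) (ne_of_gt hDpos)]
    linear_combination hCx
  -- limits
  have htendabs : Tendsto (fun x : ℝ => |x - NE|) (nhdsWithin NE s') (nhds 0) := by
    have h1 : Tendsto (fun x : ℝ => |x - NE|) (nhds NE) (nhds |NE - NE|) :=
      ((continuous_id.sub continuous_const).abs).tendsto NE
    simpa using h1.mono_left nhdsWithin_le_nhds
  have htendN : Tendsto NIfun (nhdsWithin NE s') (nhds (NIfun NE)) := by
    rw [tendsto_iff_dist_tendsto_zero]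
    have hb : Tendsto (fun x : ℝ => bEI / bII * |x - NE|) (nhdsWithin NE s') (nhds 0) := by
      have := htendabs.const_mul (bEI / bII)
      simpa using this
    apply squeeze_zero' (Eventually.of_forall fun x => dist_nonneg) ?_ hb
    filter_upwards [self_mem_nhdsWithin] with x hx
    rw [Real.dist_eq]
    have := hLip x hx
    rw [div_mul_eq_mul_div, le_div_iff₀ hbII]
    linarith
  have htendξ : Tendsto ξ (nhdsWithin NE s') (nhds (V0 NE)) := by
    rw [tendsto_iff_dist_tendsto_zero]
    have hb : Tendsto (fun x : ℝ => (bEI + bEI) * |x - NE|) (nhdsWithin NE s') (nhds 0) := by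
      have := htendabs.const_mul (bEI + bEI)
      simpa using this
    apply squeeze_zero' (Eventually.of_forall fun x => dist_nonneg) ?_ hb
    filter_upwards [self_mem_nhdsWithin] with x hx
    rw [Real.dist_eq]
    have h1 := (hξ x hx).1
    have h2 : |V0 x - V0 NE| ≤ bEI * |x - NE| + bII * |NIfun x - NIfun NE| := by
      have heq : V0 x - V0 NE = bEI * (x - NE) - bII * (NIfun x - NIfun NE) := by
        simp only [hV0def]; ring
      rw [heq, sub_eq_add_neg]
      refine (abs_add_le _ _).trans ?_
      rw [abs_neg, abs_mul, abs_mul, abs_of_pos hbEI, abs_of_pos hbII]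
    have h3 := hLip x hx
    linarith
  have htendJ : Tendsto (fun x => J (ξ x)) (nhdsWithin NE s') (nhds (J (V0 NE))) :=
    (hJcont (V0 NE)).tendsto.comp htendξ
  have htendNum : Tendsto (fun x => 1/r * bEI * NIfun NE * NIfun x * J (ξ x))
      (nhdsWithin NE s') (nhds (1/r * bEI * NIfun NE * NIfun NE * J (V0 NE))) :=
    (tendsto_const_nhds.mul htendN).mul htendJ
  have htendDen : Tendsto (fun x => 1 + 1/r * bII * NIfun NE * NIfun x * J (ξ x))
      (nhdsWithin NE s') (nhds (1 + 1/r * bII * NIfun NE * NIfun NE * J (V0 NE))) :=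
    tendsto_const_nhds.add ((tendsto_const_nhds.mul htendN).mul htendJ)
  have hD1 : 0 < 1 + 1/r * bII * NIfun NE * NIfun NE * J (V0 NE) := by
    have h1 : 0 < 1/r := by positivity
    nlinarith
  have h := htendNum.div htendDen (ne_of_gt hD1)
  have heqL : 1/r * bEI * NIfun NE * NIfun NE * J (V0 NE)
      / (1 + 1/r * bII * NIfun NE * NIfun NE * J (V0 NE))
      = bEI * NIfun NE ^ 2 * J (V0 NE) / (r + bII * NIfun NE ^ 2 * J (V0 NE)) := by
    rw [div_eq_div_iff (ne_of_gt hD1) (ne_of_gt hden)]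
    field_simp
  rw [← heqL]
  apply Tendsto.congr' ?_ h
  filter_upwards [self_mem_nhdsWithin] with x hx
  exact (hslope x hx).symm
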